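/- For m, p ∈ ℕ with m, p ≥ 1 and real x with 0 < x < 2π, Σ_{n=1}^∞ [(m+n)_p/(2n)_{2p+2m}] ζ(2n) (x/(2π))^{2n} = Σ_{k=1}^p (C_k/2^{p−1}) Σ_{j=0}^{2k−1} (−1)^j (∏_{i=1}^j (2k−i)) Σ_{n=1}^∞ ζ(2n)(x/(2π))^{2n}/(2n)_{2m+j+1}, where C_k = 1/Q'(a_k) with a_k = −(2m+2k−1)/2 and Q(t) = ∏_{r=1}^p (2t+2m+2r−1). -/

import Mathlib

open Real Finset

lemma aux_prod_pair (g : ℕ → ℂ) (p : ℕ) :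
    ∏ i ∈ range (2 * p), g i = (∏ s ∈ range p, g (2 * s)) * ∏ s ∈ range p, g (2 * s + 1) := by
  induction p with
  | zero => simp
  | succ q ih =>
    have h2 : 2 * (q + 1) = 2 * q + 1 + 1 := by ring
    rw [h2, prod_range_succ, prod_range_succ, ih, prod_range_succ, prod_range_succ]
    ring

lemma aux_telescope (NN : ℕ) : ∀ (y : ℂ), (∀ i : ℕ, i ≤ NN → y + i ≠ 0) →
    ∑ j ∈ range (NN + 1), (-1 : ℂ) ^ j * (∏ i ∈ range j, ((NN : ℂ) - i)) /
      (∏ i ∈ range (j + 1), (y + i)) = (y + NN)⁻¹ := by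
  induction NN with
  | zero => intro y hy; simp
  | succ M ih =>
    intro y hy
    have hy0 : y ≠ 0 := by simpa using hy 0 (by omega)
    have hyM : y + (M + 1 : ℂ) ≠ 0 := by
      have := hy (M + 1) le_rfl; push_cast at this ⊢; exact this
    rw [sum_range_succ']
    have hterm : ∀ j ∈ range (M + 1),
        (-1 : ℂ) ^ (j + 1) * (∏ i ∈ range (j + 1), (((M + 1 : ℕ) : ℂ) - i)) /
          (∏ i ∈ range (j + 1 + 1), (y + i)) =
        (-((M : ℂ) + 1) / y) * ((-1 : ℂ) ^ j * (∏ i ∈ range j, ((M : ℂ) - i)) /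
          (∏ i ∈ range (j + 1), ((y + 1) + i))) := by
      intro j hj
      have e1 : ∏ i ∈ range (j + 1), (((M + 1 : ℕ) : ℂ) - i)
          = ((M : ℂ) + 1) * ∏ i ∈ range j, ((M : ℂ) - i) := by
        rw [prod_range_succ']
        have : ∀ i ∈ range j, (((M + 1 : ℕ) : ℂ) - (↑(i + 1))) = ((M : ℂ) - i) := by
          intro i _; push_cast; ring
        rw [prod_congr rfl this]
        push_cast; ring
      have e2 : ∏ i ∈ range (j + 1 + 1), (y + i)
          = y * ∏ i ∈ range (j + 1), ((y + 1) + i) := by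
        rw [prod_range_succ']
        have : ∀ i ∈ range (j + 1), (y + (↑(i + 1))) = ((y + 1) + i) := by
          intro i _; push_cast; ring
        rw [prod_congr rfl this]
        ring
      have hE : ∏ i ∈ range (j + 1), ((y + 1) + i) ≠ 0 := by
        apply prod_ne_zero_iff.mpr
        intro i hi
        have := hy (i + 1) (by simp at hi hj; omega)
        push_cast at this ⊢
        intro hc; apply this; rw [← hc]; ring
      rw [e1, e2]
      field_simp
      ring
    rw [sum_congr rfl hterm, ← mul_sum, ih (y + 1) (fun i hi => by
      have := hy (i + 1) (by omega); push_cast at this ⊢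
      intro hc; apply this; rw [← hc]; ring)]
    have hyM' : y + 1 + (M : ℂ) ≠ 0 := by
      intro hc; apply hyM; rw [← hc]; ring
    simp only [zero_add, prod_range_one, prod_range_zero, pow_zero, Nat.cast_zero, add_zero]
    push_cast
    field_simp
    ring


lemma aux_partial_fractions (s : Finset ℕ) (v : ℕ → ℂ) (hvs : Set.InjOn v s)
    (hs : s.Nonempty) (z : ℂ) (hz : ∀ i ∈ s, z - v i ≠ 0) :
    ∑ k ∈ s, (∏ i ∈ s.erase k, (v k - v i))⁻¹ * (z - v k)⁻¹
      = (∏ i ∈ s, (z - v i))⁻¹ := by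
  have h := Lagrange.sum_basis hvs hs
  have h2 := congrArg (Polynomial.eval z) h
  simp only [Polynomial.eval_finset_sum, Lagrange.basis, Lagrange.basisDivisor,
    Polynomial.eval_prod, Polynomial.eval_mul, Polynomial.eval_C, Polynomial.eval_sub,
    Polynomial.eval_X, Polynomial.eval_one] at h2
  simp only [prod_mul_distrib, prod_inv_distrib] at h2
  have key : ∀ k ∈ s, (∏ i ∈ s.erase k, (v k - v i))⁻¹ * (z - v k)⁻¹
      = (∏ i ∈ s, (z - v i))⁻¹ *
        ((∏ i ∈ s.erase k, (v k - v i))⁻¹ * ∏ i ∈ s.erase k, (z - v i)) := by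
    intro k hk
    have hsplit : ∏ i ∈ s, (z - v i) = (z - v k) * ∏ i ∈ s.erase k, (z - v i) :=
      (Finset.mul_prod_erase s _ hk).symm
    have h1 : z - v k ≠ 0 := hz k hk
    have h3 : ∏ i ∈ s.erase k, (z - v i) ≠ 0 :=
      prod_ne_zero_iff.mpr fun i hi => hz i (mem_of_mem_erase hi)
    have hA : ∏ i ∈ s.erase k, (v k - v i) ≠ 0 := by
      apply prod_ne_zero_iff.mpr
      intro i hi
      have hik : i ≠ k := (mem_erase.mp hi).1
      have his : i ∈ s := (mem_erase.mp hi).2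
      exact sub_ne_zero.mpr fun hc => hik (hvs his hk hc.symm)
    rw [hsplit]
    field_simp
  rw [sum_congr rfl key, ← mul_sum, h2, mul_one]


noncomputable def zB : ℝ := ∑' j : ℕ, 1 / (j : ℝ) ^ 2

lemma zB_nonneg : 0 ≤ zB := tsum_nonneg fun j => by positivity

lemma aux_zeta_norm_le (n : ℕ+) : ‖riemannZeta (2 * (n : ℂ))‖ ≤ zB := by
  have h2n : 1 < 2 * (n : ℕ) := by have := n.pos; omega
  have hcast : (2 : ℂ) * (n : ℂ) = ((2 * (n : ℕ) : ℕ) : ℂ) := by push_cast; ring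
  rw [hcast, zeta_nat_eq_tsum_of_gt_one h2n]
  have hs2 : Summable (fun j : ℕ => 1 / (j : ℝ) ^ 2) :=
    Real.summable_one_div_nat_pow.mpr one_lt_two
  have hsn : Summable (fun j : ℕ => ‖1 / (j : ℂ) ^ (2 * (n : ℕ))‖) := by
    simp only [norm_div, norm_one, norm_pow, Complex.norm_natCast]
    exact Real.summable_one_div_nat_pow.mpr (by have := n.pos; omega)
  refine (norm_tsum_le_tsum_norm hsn).trans (Summable.tsum_le_tsum ?_ hsn hs2)
  intro j
  simp only [norm_div, norm_one, norm_pow, Complex.norm_natCast]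
  rcases Nat.eq_zero_or_pos j with h | h
  · simp [h, zero_pow (by have := n.pos; omega : 2 * (n:ℕ) ≠ 0)]
  · have h1j : (1 : ℝ) ≤ j := by exact_mod_cast h
    have hp : (j : ℝ) ^ 2 ≤ (j : ℝ) ^ (2 * (n : ℕ)) := pow_le_pow_right₀ h1j (by omega)
    exact one_div_le_one_div_of_le (by positivity) hp

lemma aux_summable (r : ℝ) (hr0 : 0 ≤ r) (hr1 : r < 1) (M : ℕ) :
    Summable (fun n : ℕ+ => riemannZeta (2 * (n : ℂ)) * ((r : ℂ)) ^ (2 * (n : ℕ)) /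
      (∏ i ∈ range M, (2 * (n : ℂ) + i))) := by
  have hg : Summable (fun n : ℕ+ => zB * (r ^ 2) ^ ((n : ℕ))) := by
    have : Summable (fun n : ℕ => zB * (r ^ 2) ^ n) :=
      (summable_geometric_of_lt_one (by positivity) (by nlinarith)).mul_left zB
    exact this.comp_injective (fun a b h => PNat.coe_injective h)
  apply Summable.of_norm_bounded hg
  intro n
  have hprod : (∏ i ∈ range M, (2 * (n : ℂ) + i)) = ((∏ i ∈ range M, (2 * (n : ℕ) + i) : ℕ) : ℂ) := by
    push_cast; ring_nf
  have hprod1 : (1 : ℝ) ≤ ((∏ i ∈ range M, (2 * (n : ℕ) + i) : ℕ) : ℝ) := by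
    have : 1 ≤ ∏ i ∈ range M, (2 * (n : ℕ) + i) :=
      Finset.one_le_prod' fun i _ => by have := n.pos; omega
    exact_mod_cast this
  rw [hprod, norm_div, norm_mul, Complex.norm_natCast]
  have hw : ‖((r : ℂ)) ^ (2 * (n : ℕ))‖ = (r ^ 2) ^ ((n : ℕ)) := by
    rw [norm_pow, Complex.norm_real, Real.norm_of_nonneg hr0, ← pow_mul, mul_comm]
  rw [hw]
  calc ‖riemannZeta (2 * (n : ℂ))‖ * (r ^ 2) ^ (n : ℕ) / ((∏ i ∈ range M, (2 * (n : ℕ) + i) : ℕ) : ℝ)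
      ≤ ‖riemannZeta (2 * (n : ℂ))‖ * (r ^ 2) ^ (n : ℕ) / 1 := by
        apply div_le_div_of_nonneg_left ?_ ?_ hprod1 <;> positivity
    _ = ‖riemannZeta (2 * (n : ℂ))‖ * (r ^ 2) ^ (n : ℕ) := by rw [div_one]
    _ ≤ zB * (r ^ 2) ^ (n : ℕ) :=
        mul_le_mul_of_nonneg_right (aux_zeta_norm_le n) (by positivity)


lemma aux_deriv (m p k : ℕ) (hk : k ∈ range p) :
    deriv (fun t : ℝ => ∏ r ∈ range p, (2 * t + 2 * m + 2 * r + 1))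
        (-(2 * (m : ℝ) + 2 * k + 1) / 2)
      = 2 * ∏ r ∈ (range p).erase k, (2 * (r : ℝ) - 2 * k) := by
  set a : ℝ := -(2 * (m : ℝ) + 2 * k + 1) / 2 with ha
  have hd : ∀ r ∈ range p, HasDerivAt (fun t : ℝ => 2 * t + 2 * (m : ℝ) + 2 * r + 1) 2 a := by
    intro r _
    have h1 : HasDerivAt (fun t : ℝ => 2 * t) 2 a := by
      simpa using (hasDerivAt_id a).const_mul 2
    simpa using ((h1.add_const (2 * (m : ℝ))).add_const (2 * (r : ℝ))).add_const 1
  have := (HasDerivAt.fun_finsetProd hd).deriv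
  rw [this]
  have hval : ∀ r : ℕ, (2 * a + 2 * (m : ℝ) + 2 * r + 1) = 2 * r - 2 * k := by
    intro r; rw [ha]; ring
  rw [Finset.sum_eq_single k]
  · simp only [smul_eq_mul]
    rw [prod_congr rfl fun j _ => hval j]
    ring
  · intro r hr hrk
    have hkmem : k ∈ (range p).erase r := mem_erase.mpr ⟨fun h => hrk h.symm, hk⟩
    rw [prod_eq_zero hkmem (by rw [hval k]; ring)]
    simp
  · intro h; exact absurd hk h


-- previous lemmas assumed available; test with axioms for speed
lemma aux_pointwise (m p : ℕ) (hm : 1 ≤ m) (hp : 1 ≤ p) (Z : ℂ) (n : ℕ+) :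
    (∏ i ∈ range p, ((m : ℂ) + n + i)) /
        (∏ i ∈ range (2 * p + 2 * m), (2 * (n : ℂ) + i)) * Z =
      ∑ k ∈ range p,
        ((((deriv (fun t : ℝ => ∏ r ∈ range p, (2 * t + 2 * m + 2 * r + 1))
              (-(2 * (m : ℝ) + 2 * k + 1) / 2))⁻¹ / 2 ^ (p - 1) : ℝ)) : ℂ) *
          ∑ j ∈ range (2 * (k + 1)),
            (-1) ^ j * (∏ i ∈ range j, (2 * (k : ℂ) + 1 - i)) *
              (Z / (∏ i ∈ range (2 * m + j + 1), (2 * (n : ℂ) + i))) := by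
  have hnpos : 1 ≤ (n : ℕ) := n.pos
  set ν : ℂ := (n : ℂ) with hν
  have hνnat : ν = ((n : ℕ) : ℂ) := by norm_cast
  set z : ℂ := 2 * ν + 2 * m with hzdef
  -- basic nonvanishing
  have hfac : ∀ i : ℕ, 2 * ν + (i : ℂ) ≠ 0 := by
    intro i
    have : 2 * ν + (i : ℂ) = ((2 * (n : ℕ) + i : ℕ) : ℂ) := by rw [hνnat]; push_cast; ring
    rw [this]
    exact Nat.cast_ne_zero.mpr (by omega)
  have hz : ∀ i : ℕ, z + (i : ℂ) ≠ 0 := by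
    intro i
    have : z + (i : ℂ) = 2 * ν + ((2 * m + i : ℕ) : ℂ) := by rw [hzdef]; push_cast; ring
    rw [this]; exact hfac _
  set Np : ℂ := ∏ i ∈ range p, ((m : ℂ) + ν + i) with hNpdef
  set P : ℂ := ∏ i ∈ range (2 * m), (2 * ν + i) with hPdef
  set Qz : ℂ := ∏ s ∈ range p, (z + 2 * s + 1) with hQzdef
  have hNp : Np ≠ 0 := by
    rw [hNpdef]
    apply prod_ne_zero_iff.mpr
    intro i _
    have : (m : ℂ) + ν + i = ((m + (n : ℕ) + i : ℕ) : ℂ) := by rw [hνnat]; push_cast; ring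
    rw [this]; exact Nat.cast_ne_zero.mpr (by omega)
  have hP : P ≠ 0 := by
    rw [hPdef]; exact prod_ne_zero_iff.mpr fun i _ => hfac i
  have hQz : Qz ≠ 0 := by
    rw [hQzdef]
    apply prod_ne_zero_iff.mpr
    intro s _
    have : z + 2 * (s : ℂ) + 1 = z + ((2 * s + 1 : ℕ) : ℂ) := by push_cast; ring
    rw [this]; exact hz _
  have h2p : ((2 : ℂ) ^ p) ≠ 0 := pow_ne_zero p two_ne_zero
  -- factor the big denominator
  have hD : ∏ i ∈ range (2 * p + 2 * m), (2 * ν + i) = P * (2 ^ p * Np * Qz) := by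
    have h1 : 2 * p + 2 * m = 2 * m + 2 * p := by ring
    rw [h1, prod_range_add, ← hPdef]
    congr 1
    have h2 : ∀ i ∈ range (2 * p), (2 * ν + ((2 * m + i : ℕ) : ℂ)) = z + i := by
      intro i _; rw [hzdef]; push_cast; ring
    rw [prod_congr rfl h2, aux_prod_pair (fun i => z + i) p]
    have h3 : ∀ s ∈ range p, z + ((2 * s : ℕ) : ℂ) = 2 * ((m : ℂ) + ν + s) := by
      intro s _; rw [hzdef]; push_cast; ring
    have h4 : ∀ s ∈ range p, z + ((2 * s + 1 : ℕ) : ℂ) = z + 2 * s + 1 := by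
      intro s _; push_cast; ring
    rw [prod_congr rfl h3, prod_congr rfl h4, prod_mul_distrib, prod_const, card_range,
      ← hNpdef, ← hQzdef]
  -- inner sums
  have hinner : ∀ k ∈ range p,
      ∑ j ∈ range (2 * (k + 1)),
        (-1 : ℂ) ^ j * (∏ i ∈ range j, (2 * (k : ℂ) + 1 - i)) *
          (Z / (∏ i ∈ range (2 * m + j + 1), (2 * ν + i)))
        = (Z / P) * (z + 2 * k + 1)⁻¹ := by
    intro k _
    have hterm : ∀ j ∈ range (2 * (k + 1)),
        (-1 : ℂ) ^ j * (∏ i ∈ range j, (2 * (k : ℂ) + 1 - i)) *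
          (Z / (∏ i ∈ range (2 * m + j + 1), (2 * ν + i)))
        = (Z / P) * ((-1 : ℂ) ^ j * (∏ i ∈ range j, (((2 * k + 1 : ℕ) : ℂ) - i)) /
            (∏ i ∈ range (j + 1), (z + i))) := by
      intro j _
      have hsplit : ∏ i ∈ range (2 * m + j + 1), (2 * ν + i)
          = P * ∏ i ∈ range (j + 1), (z + i) := by
        have h5 : 2 * m + j + 1 = 2 * m + (j + 1) := by ring
        rw [h5, prod_range_add, ← hPdef]
        congr 1
        refine prod_congr rfl fun i _ => ?_
        rw [hzdef]; push_cast; ring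
      have hd : ∀ i ∈ range j, (2 * (k : ℂ) + 1 - i) = (((2 * k + 1 : ℕ) : ℂ) - i) := by
        intro i _; push_cast; ring
      rw [hsplit, prod_congr rfl hd]
      have hE : ∏ i ∈ range (j + 1), (z + i) ≠ 0 := prod_ne_zero_iff.mpr fun i _ => hz i
      field_simp
    rw [sum_congr rfl hterm, ← mul_sum]
    congr 1
    have h6 : 2 * (k + 1) = (2 * k + 1) + 1 := by ring
    rw [h6, aux_telescope (2 * k + 1) z (fun i _ => hz i)]
    push_cast
    ring_nf
  -- coefficients
  have hcoef : ∀ k ∈ range p,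
      ((((deriv (fun t : ℝ => ∏ r ∈ range p, (2 * t + 2 * m + 2 * r + 1))
              (-(2 * (m : ℝ) + 2 * k + 1) / 2))⁻¹ / 2 ^ (p - 1) : ℝ)) : ℂ)
        = ((2 : ℂ) ^ p)⁻¹ * (∏ i ∈ (range p).erase k, (2 * (i : ℂ) - 2 * k))⁻¹ := by
    intro k hk
    rw [aux_deriv m p k hk]
    have hcast : (((2 * ∏ r ∈ (range p).erase k, (2 * (r : ℝ) - 2 * k))⁻¹ / 2 ^ (p - 1) : ℝ) : ℂ)
        = (2 * ∏ r ∈ (range p).erase k, (2 * (r : ℂ) - 2 * k))⁻¹ / 2 ^ (p - 1) := by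
      push_cast
      ring
    rw [hcast]
    have h2p1 : (2 : ℂ) ^ p = 2 * 2 ^ (p - 1) := by
      conv_lhs => rw [show p = (p - 1) + 1 by omega]
      rw [pow_succ]
      ring
    rw [h2p1, mul_inv, mul_inv]
    ring
  -- partial fractions
  have hpf : ∑ k ∈ range p, (∏ i ∈ (range p).erase k, (2 * (i : ℂ) - 2 * k))⁻¹ *
      (z + 2 * k + 1)⁻¹ = Qz⁻¹ := by
    have := aux_partial_fractions (range p) (fun i => -(2 * (i : ℂ) + 1))
      (fun a _ b _ hab => by
        simp only [neg_inj] at hab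
        have : (a : ℂ) = b := by linear_combination hab / 2
        exact_mod_cast this)
      (nonempty_range_iff.mpr (by omega)) z
      (fun i _ => by
        have : z - -(2 * (i : ℂ) + 1) = z + ((2 * i + 1 : ℕ) : ℂ) := by push_cast; ring
        rw [this]; exact hz _)
    rw [hQzdef]
    have e1 : ∀ k ∈ range p, (∏ i ∈ (range p).erase k, ((fun i => -(2 * (i : ℂ) + 1)) k -
        (fun i => -(2 * (i : ℂ) + 1)) i))⁻¹ * (z - (fun i => -(2 * (i : ℂ) + 1)) k)⁻¹
        = (∏ i ∈ (range p).erase k, (2 * (i : ℂ) - 2 * k))⁻¹ * (z + 2 * k + 1)⁻¹ := by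
      intro k _
      congr 2
      · exact prod_congr rfl fun i _ => by ring
      · ring
    rw [← sum_congr rfl e1, this]
    congr 1
    exact prod_congr rfl fun i _ => by ring
  -- assemble
  rw [sum_congr rfl (fun k hk => by rw [hcoef k hk, hinner k hk])]
  have hsum : ∑ k ∈ range p, ((2 : ℂ) ^ p)⁻¹ *
      (∏ i ∈ (range p).erase k, (2 * (i : ℂ) - 2 * k))⁻¹ * ((Z / P) * (z + 2 * k + 1)⁻¹)
      = ((2 : ℂ) ^ p)⁻¹ * (Z / P) * Qz⁻¹ := by
    rw [← hpf, mul_sum]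
    exact sum_congr rfl fun k _ => by ring
  rw [hsum, hD]
  field_simp

theorem zeta_pochhammer_general_decomposition (m p : ℕ) (hm : 1 ≤ m) (hp : 1 ≤ p)
    (x : ℝ) (hx : 0 < x) (hx' : x < 2 * π) :
    ∑' n : ℕ+, (∏ i ∈ range p, ((m : ℂ) + n + i)) /
        (∏ i ∈ range (2 * p + 2 * m), (2 * (n : ℂ) + i)) * riemannZeta (2 * n) *
        ((x / (2 * π) : ℝ) : ℂ) ^ (2 * (n : ℕ)) =
      ∑ k ∈ range p,
        ((((deriv (fun t : ℝ => ∏ r ∈ range p, (2 * t + 2 * m + 2 * r + 1))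
              (-(2 * (m : ℝ) + 2 * k + 1) / 2))⁻¹ / 2 ^ (p - 1) : ℝ)) : ℂ) *
          ∑ j ∈ range (2 * (k + 1)),
            (-1) ^ j * (∏ i ∈ range j, (2 * (k : ℂ) + 1 - i)) *
              ∑' n : ℕ+, riemannZeta (2 * n) * ((x / (2 * π) : ℝ) : ℂ) ^ (2 * (n : ℕ)) /
                (∏ i ∈ range (2 * m + j + 1), (2 * (n : ℂ) + i)) := by
  have hr0 : 0 ≤ x / (2 * π) := by positivity
  have hr1 : x / (2 * π) < 1 := (div_lt_one (by positivity)).mpr hx'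
  have hsum : ∀ M : ℕ, Summable (fun n : ℕ+ =>
      riemannZeta (2 * (n : ℂ)) * ((x / (2 * π) : ℝ) : ℂ) ^ (2 * (n : ℕ)) /
        (∏ i ∈ range M, (2 * (n : ℂ) + i))) :=
    fun M => aux_summable (x / (2 * π)) hr0 hr1 M
  have hpoint : ∀ n : ℕ+,
      (∏ i ∈ range p, ((m : ℂ) + n + i)) /
          (∏ i ∈ range (2 * p + 2 * m), (2 * (n : ℂ) + i)) * riemannZeta (2 * n) *
          ((x / (2 * π) : ℝ) : ℂ) ^ (2 * (n : ℕ)) =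
        ∑ k ∈ range p, ∑ j ∈ range (2 * (k + 1)),
          ((((deriv (fun t : ℝ => ∏ r ∈ range p, (2 * t + 2 * m + 2 * r + 1))
                (-(2 * (m : ℝ) + 2 * k + 1) / 2))⁻¹ / 2 ^ (p - 1) : ℝ)) : ℂ) *
            ((-1) ^ j * (∏ i ∈ range j, (2 * (k : ℂ) + 1 - i)) *
              (riemannZeta (2 * (n : ℂ)) * ((x / (2 * π) : ℝ) : ℂ) ^ (2 * (n : ℕ)) /
                (∏ i ∈ range (2 * m + j + 1), (2 * (n : ℂ) + i)))) := by
    intro n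
    rw [mul_assoc,
      aux_pointwise m p hm hp
        (riemannZeta (2 * (n : ℂ)) * ((x / (2 * π) : ℝ) : ℂ) ^ (2 * (n : ℕ))) n]
    simp only [Finset.mul_sum, mul_div_assoc]
  rw [tsum_congr hpoint,
    Summable.tsum_finsetSum (fun k _ => summable_sum fun j _ => (((hsum _).mul_left _).mul_left _))]
  refine sum_congr rfl fun k hk => ?_
  rw [Summable.tsum_finsetSum (fun j _ => (((hsum _).mul_left _).mul_left _))]
  simp only [tsum_mul_left]
  rw [Finset.mul_sum]
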